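/- arXiv:1606.05460 — 2 statements merged into one kernel-verified Lean document; each statement's English description precedes it below -/
import Mathlib

section
/- Bibasic generalization of Entry 1.6.5: Let q, h, t be complex numbers with |q^h| < 1, |q^t| < 1 and |q^{ht}| < 1 (principal complex powers), and let a, b be complex numbers with |a q^h| < 1 such that all denominators below are nonzero. Then ∑_{j=0}^∞ b^j (q^t)^{j(j+1)/2} / [(q^t;q^t)_j · (1 + a · q^h · (q^{ht})^j)] = (−bq^t;q^t)_∞ · ∑_{k=0}^∞ (−1)^k (aq^h)^k / (−bq^t;q^t)_{hk}. -/
open Complex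

/-- Finite q-Pochhammer symbol `(A;Q)_k = ∏_{r=0}^{k-1} (1 - A Q^r)`. -/
noncomputable def qp (A Q : ℂ) (k : ℕ) : ℂ := ∏ r ∈ Finset.range k, (1 - A * Q ^ r)

/-- Infinite q-Pochhammer symbol `(A;Q)_∞ = ∏_{r=0}^{∞} (1 - A Q^r)`. -/
noncomputable def qpInf (A Q : ℂ) : ℂ := ∏' r : ℕ, (1 - A * Q ^ r)

/-- q-Pochhammer symbol with (possibly non-integer) index:
`(A;Q)_{c k} := (A;Q)_∞ / (A R^k;Q)_∞` where `R = Q^c`. -/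
noncomputable def qpc (A Q R : ℂ) (k : ℕ) : ℂ := qpInf A Q / qpInf (A * R ^ k) Q

/-- q-Pochhammer symbol with shifted (possibly non-integer) index:
`(A;Q)_{c k + 1} := (A;Q)_∞ / (A Q R^k;Q)_∞` where `R = Q^c`. -/
noncomputable def qpc1 (A Q R : ℂ) (k : ℕ) : ℂ := qpInf A Q / qpInf (A * Q * R ^ k) Q

open Filter Topology Finset

/-- Euler series term. -/
noncomputable def et (Q z : ℂ) (j : ℕ) : ℂ := z ^ j * Q ^ (j * (j + 1) / 2) / qp Q Q j

lemma qp_zero (A Q : ℂ) : qp A Q 0 = 1 := by simp [qp]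

lemma qp_succ (A Q : ℂ) (n : ℕ) : qp A Q (n + 1) = qp A Q n * (1 - A * Q ^ n) :=
  Finset.prod_range_succ _ _

lemma qpQQ_ne {Q : ℂ} (hfac : ∀ r : ℕ, (1 : ℂ) - Q ^ (r + 1) ≠ 0) (j : ℕ) :
    qp Q Q j ≠ 0 := by
  refine Finset.prod_ne_zero_iff.2 fun r _ => ?_
  have := hfac r
  rwa [pow_succ, mul_comm (Q ^ r) Q] at this

lemma et_zero (Q z : ℂ) : et Q z 0 = 1 := by simp [et, qp]

lemma et_succ {Q : ℂ} (hfac : ∀ r : ℕ, (1 : ℂ) - Q ^ (r + 1) ≠ 0) (z : ℂ) (j : ℕ) :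
    et Q z (j + 1) = et Q z j * (z * Q ^ (j + 1) / (1 - Q ^ (j + 1))) := by
  have he : (j + 1) * (j + 1 + 1) / 2 = j * (j + 1) / 2 + (j + 1) := by
    rw [show (j + 1) * (j + 1 + 1) = j * (j + 1) + 2 * (j + 1) by ring,
      Nat.add_mul_div_left _ _ two_pos]
  have h2 : (1 : ℂ) - Q * Q ^ j = 1 - Q ^ (j + 1) := by rw [pow_succ]; ring
  rw [et, et, qp_succ, he, pow_add, pow_succ z, h2]
  field_simp [qpQQ_ne hfac j, hfac j]
  ring

lemma et_scale (Q z w : ℂ) (j : ℕ) : et Q (z * w) j = w ^ j * et Q z j := by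
  rw [et, et, mul_pow]; ring

lemma summable_norm_et {Q : ℂ} (hQ : ‖Q‖ < 1) (hfac : ∀ r : ℕ, (1 : ℂ) - Q ^ (r + 1) ≠ 0)
    (z : ℂ) : Summable fun j => ‖et Q z j‖ := by
  have h1Q : (0 : ℝ) < 1 - ‖Q‖ := by linarith
  apply summable_of_ratio_norm_eventually_le (r := 1 / 2) (by norm_num)
  have h0 : Tendsto (fun n : ℕ => ‖z‖ * ‖Q‖ ^ (n + 1) / (1 - ‖Q‖)) atTop (𝓝 0) := by
    have := (tendsto_pow_atTop_nhds_zero_of_norm_lt_one (x := ‖Q‖) (by simpa using hQ)).comp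
      (tendsto_add_atTop_nat 1)
    simpa using (this.const_mul ‖z‖).div_const (1 - ‖Q‖)
  filter_upwards [h0.eventually (eventually_le_nhds (by norm_num : (0:ℝ) < 1/2))] with n hn
  simp only [norm_norm]
  rw [et_succ hfac, norm_mul, norm_div, norm_mul, norm_pow]
  have hd : 1 - ‖Q‖ ≤ ‖1 - Q ^ (n + 1)‖ := by
    have h1 : ‖(1 : ℂ)‖ - ‖Q ^ (n + 1)‖ ≤ ‖1 - Q ^ (n + 1)‖ := norm_sub_norm_le _ _
    have h2 : ‖Q ^ (n + 1)‖ ≤ ‖Q‖ := by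
      rw [norm_pow]
      exact pow_le_of_le_one (norm_nonneg _) hQ.le (Nat.succ_ne_zero n)
    simp only [norm_one] at h1
    linarith
  have hr : ‖z‖ * ‖Q‖ ^ (n + 1) / ‖1 - Q ^ (n + 1)‖ ≤ ‖z‖ * ‖Q‖ ^ (n + 1) / (1 - ‖Q‖) := by
    apply div_le_div_of_nonneg_left _ h1Q hd
    positivity
  have := hr.trans hn
  calc ‖et Q z n‖ * (‖z‖ * ‖Q‖ ^ (n + 1) / ‖1 - Q ^ (n + 1)‖)
      ≤ ‖et Q z n‖ * (1 / 2) := by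
        exact mul_le_mul_of_nonneg_left this (norm_nonneg _)
    _ = 1 / 2 * ‖et Q z n‖ := by ring

lemma summable_et {Q : ℂ} (hQ : ‖Q‖ < 1) (hfac : ∀ r : ℕ, (1 : ℂ) - Q ^ (r + 1) ≠ 0)
    (z : ℂ) : Summable fun j => et Q z j :=
  (summable_norm_et hQ hfac z).of_norm

lemma euler_funEq {Q : ℂ} (hQ : ‖Q‖ < 1) (hfac : ∀ r : ℕ, (1 : ℂ) - Q ^ (r + 1) ≠ 0)
    (z : ℂ) : ∑' j, et Q z j = (1 + z * Q) * ∑' j, et Q (z * Q) j := by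
  have hs1 : Summable fun j => et Q z j := summable_et hQ hfac z
  have hs2 : Summable fun j => et Q (z * Q) j := summable_et hQ hfac (z * Q)
  have hs1' : Summable fun j => et Q z (j + 1) := (summable_nat_add_iff 1).2 hs1
  have hs2' : Summable fun j => et Q (z * Q) (j + 1) := (summable_nat_add_iff 1).2 hs2
  have key : ∀ j, et Q z (j + 1) = et Q (z * Q) (j + 1) + z * Q * et Q (z * Q) j := by
    intro j
    rw [et_succ hfac, et_succ hfac, et_scale Q z Q j]
    field_simp [hfac j]
    ring
  have e1 : ∑' j, et Q z j = 1 + ∑' j, et Q z (j + 1) := by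
    rw [Summable.tsum_eq_zero_add hs1, et_zero]
  have e2 : ∑' j, et Q (z * Q) j = 1 + ∑' j, et Q (z * Q) (j + 1) := by
    rw [Summable.tsum_eq_zero_add hs2, et_zero]
  have e3 : ∑' j, et Q z (j + 1)
      = ∑' j, et Q (z * Q) (j + 1) + z * Q * ∑' j, et Q (z * Q) j := by
    rw [← tsum_mul_left, ← Summable.tsum_add hs2' (hs2.mul_left _)]
    exact tsum_congr key
  rw [e1, e3, e2]; ring

lemma tprod_eq_zero {f : ℕ → ℂ} (i0 : ℕ) (h : f i0 = 0) : ∏' i, f i = 0 := by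
  have hp : HasProd f 0 := by
    rw [HasProd]
    apply Tendsto.congr' _ (tendsto_const_nhds (x := (0 : ℂ)))
    filter_upwards [eventually_ge_atTop ({i0} : Finset ℕ)] with s hs
    exact (Finset.prod_eq_zero (hs (Finset.mem_singleton_self i0)) h).symm
  exact hp.tprod_eq

lemma multipliable_qpInf (A Q : ℂ) (hQ : ‖Q‖ < 1) (hA : ∀ r : ℕ, (1 : ℂ) - A * Q ^ r ≠ 0) :
    Multipliable fun r : ℕ => 1 - A * Q ^ r := by
  have hlog : Summable fun n : ℕ => Complex.log (1 - A * Q ^ n) := by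
    apply Summable.of_norm_bounded_eventually
      (g := fun n => 3 / 2 * (‖A‖ * ‖Q‖ ^ n))
      (((summable_geometric_of_lt_one (norm_nonneg Q) hQ).mul_left ‖A‖).mul_left (3/2))
    rw [Nat.cofinite_eq_atTop]
    have h0 : Tendsto (fun n : ℕ => ‖A‖ * ‖Q‖ ^ n) atTop (𝓝 0) := by
      simpa using (tendsto_pow_atTop_nhds_zero_of_norm_lt_one
        (x := ‖Q‖) (by simpa using hQ)).const_mul ‖A‖
    filter_upwards [h0.eventually (eventually_le_nhds (by norm_num : (0:ℝ) < 1/2))] with n hn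
    have hb : ‖-(A * Q ^ n)‖ ≤ 1 / 2 := by
      rw [norm_neg, norm_mul, norm_pow]; exact hn
    have hl := Complex.norm_log_one_add_half_le_self hb
    rw [show (1 : ℂ) + -(A * Q ^ n) = 1 - A * Q ^ n by ring] at hl
    refine hl.trans ?_
    rw [norm_neg, norm_mul, norm_pow]
  exact Complex.multipliable_of_summable_log hlog

lemma euler_tail {Q : ℂ} (hQ : ‖Q‖ < 1) (hfac : ∀ r : ℕ, (1 : ℂ) - Q ^ (r + 1) ≠ 0)
    (z : ℂ) : Tendsto (fun n : ℕ => ∑' j, et Q (z * Q ^ n) j) atTop (𝓝 1) := by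
  set C : ℝ := ∑' j, ‖et Q z (j + 1)‖ with hC
  rw [tendsto_iff_norm_sub_tendsto_zero]
  apply squeeze_zero (fun n => norm_nonneg _) (g := fun n => ‖Q‖ ^ n * C)
  · intro n
    have hsum : Summable fun j => et Q (z * Q ^ n) (j + 1) :=
      (summable_nat_add_iff 1).2 (summable_et hQ hfac _)
    have hsumN : Summable fun j => ‖et Q (z * Q ^ n) (j + 1)‖ :=
      (summable_nat_add_iff (f := fun j => ‖et Q (z * Q ^ n) j‖) 1).2
        (summable_norm_et hQ hfac _)
    have hsumN' : Summable fun j => ‖et Q z (j + 1)‖ :=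
      (summable_nat_add_iff (f := fun j => ‖et Q z j‖) 1).2 (summable_norm_et hQ hfac z)
    have e : (∑' j, et Q (z * Q ^ n) j) - 1 = ∑' j, et Q (z * Q ^ n) (j + 1) := by
      rw [Summable.tsum_eq_zero_add (summable_et hQ hfac _), et_zero]; ring
    rw [e]
    refine (norm_tsum_le_tsum_norm hsumN).trans ?_
    have hle : ∀ j, ‖et Q (z * Q ^ n) (j + 1)‖ ≤ ‖Q‖ ^ n * ‖et Q z (j + 1)‖ := by
      intro j
      rw [et_scale, norm_mul, norm_pow, norm_pow, ← pow_mul]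
      have : ‖Q‖ ^ (n * (j + 1)) ≤ ‖Q‖ ^ n :=
        pow_le_pow_of_le_one (norm_nonneg Q) hQ.le (Nat.le_mul_of_pos_right n (Nat.succ_pos j))
      exact mul_le_mul_of_nonneg_right this (norm_nonneg _)
    refine (Summable.tsum_le_tsum hle hsumN (hsumN'.mul_left _)).trans_eq ?_
    rw [tsum_mul_left]
  · have := (tendsto_pow_atTop_nhds_zero_of_norm_lt_one (x := ‖Q‖) (by simpa using hQ)).mul_const C
    simpa using this

lemma euler {Q : ℂ} (hQ : ‖Q‖ < 1) (hfac : ∀ r : ℕ, (1 : ℂ) - Q ^ (r + 1) ≠ 0)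
    (z : ℂ) (hz : ∀ r : ℕ, (1 : ℂ) + z * Q ^ (r + 1) ≠ 0) :
    ∑' j, et Q z j = qpInf (-(z * Q)) Q := by
  have hA : ∀ r : ℕ, (1 : ℂ) - -(z * Q) * Q ^ r ≠ 0 := by
    intro r
    rw [show (1 : ℂ) - -(z * Q) * Q ^ r = 1 + z * Q ^ (r + 1) by rw [pow_succ]; ring]
    exact hz r
  have hm : Multipliable fun r : ℕ => 1 - -(z * Q) * Q ^ r := multipliable_qpInf _ _ hQ hA
  have iter : ∀ n : ℕ, (∑' j, et Q z j) = qp (-(z * Q)) Q n * ∑' j, et Q (z * Q ^ n) j := by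
    intro n
    induction n with
    | zero => simp [qp_zero]
    | succ n ih =>
      rw [ih, euler_funEq hQ hfac (z * Q ^ n), qp_succ]
      rw [show z * Q ^ n * Q = z * Q ^ (n + 1) by rw [pow_succ]; ring,
        show (1 : ℂ) + z * Q ^ (n + 1) = 1 - -(z * Q) * Q ^ n by rw [pow_succ]; ring]
      ring
  have t1 : Tendsto (fun n : ℕ => qp (-(z * Q)) Q n) atTop (𝓝 (qpInf (-(z * Q)) Q)) :=
    hm.hasProd.tendsto_prod_nat
  have t2 := euler_tail hQ hfac z
  have t3 : Tendsto (fun n : ℕ => qp (-(z * Q)) Q n * ∑' j, et Q (z * Q ^ n) j) atTop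
      (𝓝 (qpInf (-(z * Q)) Q * 1)) := t1.mul t2
  have t4 : Tendsto (fun _ : ℕ => ∑' j, et Q z j) atTop (𝓝 (qpInf (-(z * Q)) Q * 1)) := by
    apply t3.congr
    intro n; exact (iter n).symm
  have := tendsto_nhds_unique t4 tendsto_const_nhds
  rw [← this, mul_one]


set_option maxHeartbeats 1000000 in
/-- bibasic generalization of Entry 1.6.5. -/
theorem entry_1_6_5_bibasic (q h t a b : ℂ)
    (hqh : ‖q ^ h‖ < 1) (hqt : ‖q ^ t‖ < 1)
    (hqht : ‖q ^ (h * t)‖ < 1)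
    (haq : ‖a * q ^ h‖ < 1)
    (h1 : ∀ j : ℕ, qp (q ^ t) (q ^ t) j ≠ 0)
    (h2 : ∀ j : ℕ, (1 + a * q ^ h * (q ^ (h * t)) ^ j) ≠ 0)
    (h3 : ∀ k : ℕ, qpc (-b * q ^ t) (q ^ t) (q ^ (h * t)) k ≠ 0)
    (h4 : ∀ k : ℕ, qpInf (-b * q ^ t * (q ^ (h * t)) ^ k) (q ^ t) ≠ 0) :
    ∑' j : ℕ, b ^ j * (q ^ t) ^ (j * (j + 1) / 2) /
        (qp (q ^ t) (q ^ t) j * (1 + a * q ^ h * (q ^ (h * t)) ^ j))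
    = qpInf (-b * q ^ t) (q ^ t) *
      ∑' k : ℕ, (-1 : ℂ) ^ k * (a * q ^ h) ^ k /
        qpc (-b * q ^ t) (q ^ t) (q ^ (h * t)) k := by
  have hQ : ‖q ^ t‖ < 1 := by exact hqt
  have hP : ‖q ^ (h * t)‖ < 1 := by exact hqht
  have hx : ‖a * q ^ h‖ < 1 := by exact haq
  set Q := q ^ t with hQdef
  set P := q ^ (h * t) with hPdef
  set x := a * q ^ h with hxdef
  have hfac : ∀ r : ℕ, (1 : ℂ) - Q ^ (r + 1) ≠ 0 := by
    intro r
    have h := Finset.prod_ne_zero_iff.1 (h1 (r + 1)) r (Finset.self_mem_range_succ r)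
    rwa [show (1 : ℂ) - Q * Q ^ r = 1 - Q ^ (r + 1) by rw [pow_succ]; ring] at h
  have hzfac : ∀ k r : ℕ, (1 : ℂ) + (b * P ^ k) * Q ^ (r + 1) ≠ 0 := by
    intro k r hcon
    apply h4 k
    unfold qpInf
    apply tprod_eq_zero r
    rw [show (1 : ℂ) - (-b * Q * P ^ k) * Q ^ r = 1 + (b * P ^ k) * Q ^ (r + 1) by
      rw [pow_succ]; ring]
    exact hcon
  have hne0 : qpInf (-b * Q) Q ≠ 0 := by
    have := h4 0; simpa using this
  have hetb := summable_norm_et hQ hfac b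
  have hgeo : Summable fun k : ℕ => ‖x‖ ^ k :=
    summable_geometric_of_lt_one (norm_nonneg x) hx
  have hu : Summable (fun p : ℕ × ℕ => et Q b p.1 * ((-x) ^ p.2 * P ^ (p.1 * p.2))) := by
    apply Summable.of_norm_bounded (g := fun p : ℕ × ℕ => ‖et Q b p.1‖ * ‖x‖ ^ p.2)
      (hetb.mul_of_nonneg hgeo (fun j => norm_nonneg _)
        (fun k => pow_nonneg (norm_nonneg _) _))
    intro p
    rw [norm_mul, norm_mul, norm_pow, norm_pow, norm_neg]
    have hPp : ‖P‖ ^ (p.1 * p.2) ≤ 1 := pow_le_one₀ (norm_nonneg _) hP.le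
    have h1' : ‖x‖ ^ p.2 * ‖P‖ ^ (p.1 * p.2) ≤ ‖x‖ ^ p.2 :=
      mul_le_of_le_one_right (pow_nonneg (norm_nonneg x) p.2) hPp
    exact mul_le_mul_of_nonneg_left h1' (norm_nonneg _)
  calc
    ∑' j : ℕ, b ^ j * Q ^ (j * (j + 1) / 2) / (qp Q Q j * (1 + x * P ^ j))
        = ∑' j : ℕ, ∑' k : ℕ, et Q b j * ((-x) ^ k * P ^ (j * k)) := by
      refine tsum_congr fun j => ?_
      have hgj : ‖-(x * P ^ j)‖ < 1 := by
        rw [norm_neg, norm_mul, norm_pow]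
        exact lt_of_le_of_lt
          (mul_le_of_le_one_right (norm_nonneg x) (pow_le_one₀ (norm_nonneg _) hP.le)) hx
      have hgeoj : ∑' k : ℕ, (-(x * P ^ j)) ^ k = (1 + x * P ^ j)⁻¹ := by
        rw [tsum_geometric_of_norm_lt_one hgj, sub_neg_eq_add]
      have hetdef : et Q b j = b ^ j * Q ^ (j * (j + 1) / 2) / qp Q Q j := rfl
      rw [← div_div, ← hetdef, div_eq_mul_inv, ← hgeoj, ← tsum_mul_left]
      refine tsum_congr fun k => ?_
      rw [show (-(x * P ^ j)) = (-x) * P ^ j by ring, mul_pow, ← pow_mul]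
    _ = ∑' k : ℕ, ∑' j : ℕ, et Q b j * ((-x) ^ k * P ^ (j * k)) := (Summable.tsum_comm (f := fun j k => et Q b j * ((-x) ^ k * P ^ (j * k))) hu).symm
    _ = ∑' k : ℕ, (-x) ^ k * qpInf (-(b * P ^ k * Q)) Q := by
      refine tsum_congr fun k => ?_
      rw [← euler hQ hfac (b * P ^ k) (hzfac k), ← tsum_mul_left]
      refine tsum_congr fun j => ?_
      rw [et_scale Q b (P ^ k) j, ← pow_mul, Nat.mul_comm k j]
      ring
    _ = qpInf (-b * Q) Q *
        ∑' k : ℕ, (-1 : ℂ) ^ k * x ^ k / qpc (-b * Q) Q P k := by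
      rw [← tsum_mul_left]
      refine tsum_congr fun k => ?_
      rw [show (-(b * P ^ k * Q)) = -b * Q * P ^ k by ring]
      rw [qpc, neg_pow]
      have hne0' : qpInf (-(b * Q)) Q ≠ 0 := by
        rw [show (-(b * Q) : ℂ) = -b * Q by ring]; exact hne0
      field_simp [hne0, hne0', h4 k]
end

section
/- Root-of-unity summation generalizing Entry 1.6.6: Let h ≥ 1 be an integer, let ω be a primitive h-th root of unity in ℂ, let q, t be complex numbers with |q| < 1 and |q^t| < 1 (principal complex power), and let a be a complex number with |aq| < 1 such that 1 − a^h·(q^h)·(q^t)^{hj} ≠ 0 for every nonnegative integer j and (a q ω^r ; q^t)_∞ ≠ 0 for r = 0, 1, …, h−1. Then ∑_{j=0}^∞ (−1)^j (q^t)^{j(j+1)/2} / [(q^t;q^t)_j · (1 − a^h q^{h(tj+1)})] = (1/h) · ∑_{r=0}^{h−1} (q^t;q^t)_∞ / (a q ω^r ; q^t)_∞, where q^{h(tj+1)} := q^h·(q^t)^{hj}. -/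
open Complex
open Filter Topology

namespace E166

lemma summable_log {Q : ℂ} (hQ : ‖Q‖ < 1) (A : ℂ) :
    Summable (fun n : ℕ => Complex.log (1 - A * Q ^ n)) := by
  have htend : Tendsto (fun n : ℕ => ‖A‖ * ‖Q‖ ^ n) atTop (𝓝 0) := by
    have := (tendsto_pow_atTop_nhds_zero_of_norm_lt_one
      (x := ‖Q‖) (by simpa using hQ)).const_mul ‖A‖
    simpa using this
  have hev : ∀ᶠ n : ℕ in atTop, ‖A‖ * ‖Q‖ ^ n ≤ 1 / 2 :=
    htend.eventually (eventually_le_nhds (by norm_num))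
  apply Summable.of_norm_bounded_eventually_nat (g := fun n => 3 / 2 * (‖A‖ * ‖Q‖ ^ n))
  · exact ((summable_geometric_of_lt_one (norm_nonneg Q) hQ).mul_left ‖A‖).mul_left _
  · filter_upwards [hev] with n hn
    have h1 : ‖A * Q ^ n‖ ≤ 1 / 2 := by rwa [norm_mul, norm_pow]
    have h2 : ‖Complex.log (1 + -(A * Q ^ n))‖ ≤ 3 / 2 * ‖-(A * Q ^ n)‖ :=
      Complex.norm_log_one_add_half_le_self (by rwa [norm_neg])
    rw [norm_neg, norm_mul, norm_pow] at h2
    simpa [sub_eq_add_neg] using h2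

lemma one_sub_ne {z : ℂ} (hz : ‖z‖ < 1) : (1 : ℂ) - z ≠ 0 := by
  intro hc
  have : (1 : ℂ) = z := by linear_combination hc
  rw [← this] at hz
  simp at hz

lemma factor_ne {Q A : ℂ} (hQ : ‖Q‖ < 1) (hA : ‖A‖ < 1) (n : ℕ) :
    (1 : ℂ) - A * Q ^ n ≠ 0 := by
  apply one_sub_ne
  rw [norm_mul, norm_pow]
  calc ‖A‖ * ‖Q‖ ^ n ≤ ‖A‖ * 1 := by
        gcongr
        exact pow_le_one₀ (norm_nonneg Q) hQ.le
    _ < 1 := by simpa using hA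

lemma qp_ne_zero {Q A : ℂ} (hQ : ‖Q‖ < 1) (hA : ‖A‖ < 1) (k : ℕ) : qp A Q k ≠ 0 :=
  Finset.prod_ne_zero_iff.mpr fun n _ => factor_ne hQ hA n

lemma qpInf_eq_exp {Q A : ℂ} (hQ : ‖Q‖ < 1) (hA : ‖A‖ < 1) :
    qpInf A Q = Complex.exp (∑' n : ℕ, Complex.log (1 - A * Q ^ n)) := by
  have := Complex.cexp_tsum_eq_tprod (f := fun (n : ℕ) => 1 - A * Q ^ n)
    (fun n => factor_ne hQ hA n) (summable_log hQ A)
  exact this.symm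

lemma qpInf_ne_zero {Q A : ℂ} (hQ : ‖Q‖ < 1) (hA : ‖A‖ < 1) : qpInf A Q ≠ 0 := by
  rw [qpInf_eq_exp hQ hA]; exact Complex.exp_ne_zero _

lemma qp_eq_exp {Q A : ℂ} (hQ : ‖Q‖ < 1) (hA : ‖A‖ < 1) (k : ℕ) :
    qp A Q k = Complex.exp (∑ n ∈ Finset.range k, Complex.log (1 - A * Q ^ n)) := by
  rw [Complex.exp_sum]
  exact (Finset.prod_congr rfl fun n _ => (Complex.exp_log (factor_ne hQ hA n)).symm)

lemma qp_mul_qpInf {Q A : ℂ} (hQ : ‖Q‖ < 1) (hA : ‖A‖ < 1) (k : ℕ) :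
    qp A Q k * qpInf (A * Q ^ k) Q = qpInf A Q := by
  have hA' : ‖A * Q ^ k‖ < 1 := by
    rw [norm_mul, norm_pow]
    calc ‖A‖ * ‖Q‖ ^ k ≤ ‖A‖ * 1 := by
          gcongr; exact pow_le_one₀ (norm_nonneg Q) hQ.le
      _ < 1 := by simpa using hA
  rw [qpInf_eq_exp hQ hA, qpInf_eq_exp hQ hA',
    ← Summable.sum_add_tsum_nat_add k (summable_log hQ A), Complex.exp_add, qp_eq_exp hQ hA]
  congr 2
  apply tsum_congr
  intro n
  congr 2
  rw [pow_add]
  ring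

lemma tendsto_qp {Q A : ℂ} (hQ : ‖Q‖ < 1) (hA : ‖A‖ < 1) :
    Tendsto (fun k => qp A Q k) atTop (𝓝 (qpInf A Q)) := by
  have hsum := (summable_log hQ A).hasSum.tendsto_sum_nat
  have h2 := (Complex.continuous_exp.tendsto _).comp hsum
  rw [qpInf_eq_exp hQ hA]
  refine h2.congr fun k => ?_
  exact (qp_eq_exp hQ hA k).symm

lemma exists_lb {Q : ℂ} (hQ : ‖Q‖ < 1) :
    ∃ C : ℝ, 0 < C ∧ ∀ n, C ≤ ‖qp Q Q n‖ := by
  have hne : qpInf Q Q ≠ 0 := qpInf_ne_zero hQ hQ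
  have hl : 0 < ‖qpInf Q Q‖ := norm_pos_iff.mpr hne
  have ht : Tendsto (fun n => ‖qp Q Q n‖) atTop (𝓝 ‖qpInf Q Q‖) := (tendsto_qp hQ hQ).norm
  have hev : ∀ᶠ n : ℕ in atTop, ‖qpInf Q Q‖ / 2 ≤ ‖qp Q Q n‖ :=
    ht.eventually (eventually_ge_nhds (by linarith))
  obtain ⟨N, hN⟩ := eventually_atTop.mp hev
  set s := (Finset.range (N + 1)).image (fun n => ‖qp Q Q n‖) with hs
  have hsne : s.Nonempty := ⟨‖qp Q Q 0‖, Finset.mem_image_of_mem _ (by simp)⟩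
  refine ⟨min (‖qpInf Q Q‖ / 2) (s.min' hsne), lt_min (by linarith) ?_, fun n => ?_⟩
  · obtain ⟨n, -, hn⟩ := Finset.mem_image.mp (s.min'_mem hsne)
    rw [← hn]
    exact norm_pos_iff.mpr (qp_ne_zero hQ hQ n)
  · rcases le_or_gt N n with h | h
    · exact le_trans (min_le_left _ _) (hN n h)
    · exact le_trans (min_le_right _ _)
        (s.min'_le _ (Finset.mem_image_of_mem _ (Finset.mem_range.mpr (by omega))))


noncomputable def F (Q z : ℂ) : ℂ := ∑' n : ℕ, z ^ n / qp Q Q n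
noncomputable def H (Q x : ℂ) : ℂ :=
  ∑' j : ℕ, (-1) ^ j * Q ^ (j * (j + 1) / 2) * x ^ j / qp Q Q j

lemma tri_le (j : ℕ) : j ≤ j * (j + 1) / 2 := by
  rw [Nat.le_div_iff_mul_le (by norm_num)]
  rcases Nat.eq_zero_or_pos j with h | h
  · simp [h]
  · exact Nat.mul_le_mul_left j (by omega)

lemma summable_div_qp {Q : ℂ} (hQ : ‖Q‖ < 1) {c : ℕ → ℂ} {M r : ℝ} (h0 : 0 ≤ r) (hr : r < 1)
    (hc : ∀ n, ‖c n‖ ≤ M * r ^ n) : Summable (fun n => c n / qp Q Q n) := by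
  obtain ⟨C, hC0, hC⟩ := exists_lb hQ
  have hM : 0 ≤ M := by
    have := (norm_nonneg (c 0)).trans (hc 0)
    simpa using this
  apply Summable.of_norm_bounded (g := fun n => M / C * r ^ n)
  · exact (summable_geometric_of_lt_one h0 hr).mul_left _
  · intro n
    rw [norm_div]
    calc ‖c n‖ / ‖qp Q Q n‖ ≤ M * r ^ n / C := by
          apply div_le_div₀ (by positivity) (hc n) hC0 (hC n)
      _ = M / C * r ^ n := by ring

lemma summable_F {Q : ℂ} (hQ : ‖Q‖ < 1) {z : ℂ} (hz : ‖z‖ < 1) :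
    Summable (fun n => z ^ n / qp Q Q n) :=
  summable_div_qp hQ (norm_nonneg z) hz
    (fun n => by rw [norm_pow]; exact le_of_eq (one_mul _).symm)

lemma summable_H {Q : ℂ} (hQ : ‖Q‖ < 1) {x : ℂ} (hx : ‖x‖ ≤ 1) :
    Summable (fun j => (-1 : ℂ) ^ j * Q ^ (j * (j + 1) / 2) * x ^ j / qp Q Q j) := by
  apply summable_div_qp hQ (norm_nonneg Q) hQ (M := 1)
  intro j
  rw [norm_mul, norm_mul, norm_pow, norm_pow, norm_pow, norm_neg, norm_one, one_pow, one_mul,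
    one_mul]
  calc ‖Q‖ ^ (j * (j + 1) / 2) * ‖x‖ ^ j
      ≤ ‖Q‖ ^ j * ‖x‖ ^ j :=
        mul_le_mul_of_nonneg_right
          (pow_le_pow_of_le_one (norm_nonneg Q) hQ.le (tri_le j)) (by positivity)
    _ ≤ ‖Q‖ ^ j * 1 ^ j := by
        apply mul_le_mul_of_nonneg_left _ (by positivity)
        exact pow_le_pow_left₀ (norm_nonneg x) hx j
    _ = ‖Q‖ ^ j := by simp

lemma norm_mul_pow_lt {Q z : ℂ} (hQ : ‖Q‖ < 1) (hz : ‖z‖ < 1) (N : ℕ) : ‖z * Q ^ N‖ < 1 := by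
  rw [norm_mul, norm_pow]
  calc ‖z‖ * ‖Q‖ ^ N ≤ ‖z‖ * 1 :=
        mul_le_mul_of_nonneg_left (pow_le_one₀ (norm_nonneg Q) hQ.le) (norm_nonneg z)
    _ < 1 := by simpa using hz

lemma qp_succ (A Q : ℂ) (n : ℕ) : qp A Q (n + 1) = qp A Q n * (1 - A * Q ^ n) :=
  Finset.prod_range_succ _ n

lemma F_rec {Q : ℂ} (hQ : ‖Q‖ < 1) {z : ℂ} (hz : ‖z‖ < 1) :
    (1 - z) * F Q z = F Q (z * Q) := by
  have hzQ : ‖z * Q‖ < 1 := by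
    have := norm_mul_pow_lt hQ hz 1
    simpa using this
  have hs1 : Summable (fun n => z ^ n / qp Q Q n) := summable_F hQ hz
  have hs2 : Summable (fun n => (z * Q) ^ n / qp Q Q n) := summable_F hQ hzQ
  have key : F Q z - F Q (z * Q) = z * F Q z := by
    rw [F, F, ← Summable.tsum_sub hs1 hs2]
    have hsg : Summable (fun n => (z ^ n - (z * Q) ^ n) / qp Q Q n) := by
      simpa [sub_div] using hs1.sub hs2
    have hcongr : ∀ n : ℕ, z ^ n / qp Q Q n - (z * Q) ^ n / qp Q Q n
        = (z ^ n - (z * Q) ^ n) / qp Q Q n := fun n => (sub_div _ _ _).symm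
    rw [tsum_congr hcongr, Summable.tsum_eq_zero_add hsg]
    have h0 : (z ^ 0 - (z * Q) ^ 0) / qp Q Q 0 = 0 := by simp
    have hstep : ∀ n : ℕ, (z ^ (n + 1) - (z * Q) ^ (n + 1)) / qp Q Q (n + 1)
        = z * (z ^ n / qp Q Q n) := by
      intro n
      rw [qp_succ]
      have h2 : (1 : ℂ) - Q * Q ^ n ≠ 0 := factor_ne hQ hQ n
      have h3 : qp Q Q n ≠ 0 := qp_ne_zero hQ hQ n
      field_simp
      ring
    rw [h0, zero_add, tsum_congr hstep, tsum_mul_left]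
  linear_combination key

lemma F_prod {Q : ℂ} (hQ : ‖Q‖ < 1) {z : ℂ} (hz : ‖z‖ < 1) (N : ℕ) :
    qp z Q N * F Q z = F Q (z * Q ^ N) := by
  induction N with
  | zero => simp [qp]
  | succ N ih =>
    rw [qp_succ, mul_comm (qp z Q N) (1 - z * Q ^ N), mul_assoc, ih,
      F_rec hQ (norm_mul_pow_lt hQ hz N)]
    congr 1
    rw [pow_succ]
    ring

lemma F_sub_one {Q : ℂ} (hQ : ‖Q‖ < 1) {C : ℝ} (hC0 : 0 < C) (hC : ∀ n, C ≤ ‖qp Q Q n‖)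
    {z : ℂ} (hz : ‖z‖ < 1) : ‖F Q z - 1‖ ≤ ‖z‖ / C * (1 - ‖z‖)⁻¹ := by
  have hs1 : Summable (fun n => z ^ n / qp Q Q n) := summable_F hQ hz
  have htail : Summable (fun n : ℕ => z ^ (n + 1) / qp Q Q (n + 1)) :=
    (summable_nat_add_iff (f := fun n => z ^ n / qp Q Q n) 1).mpr hs1
  have hF : F Q z - 1 = ∑' n : ℕ, z ^ (n + 1) / qp Q Q (n + 1) := by
    rw [F, Summable.tsum_eq_zero_add hs1]
    simp [qp]
  rw [hF]
  have hbound : ∀ n : ℕ, ‖z ^ (n + 1) / qp Q Q (n + 1)‖ ≤ ‖z‖ / C * ‖z‖ ^ n := by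
    intro n
    rw [norm_div, norm_pow]
    calc ‖z‖ ^ (n + 1) / ‖qp Q Q (n + 1)‖ ≤ ‖z‖ ^ (n + 1) / C :=
          div_le_div_of_nonneg_left (by positivity) hC0 (hC (n + 1))
      _ = ‖z‖ / C * ‖z‖ ^ n := by ring
  calc ‖∑' n : ℕ, z ^ (n + 1) / qp Q Q (n + 1)‖
      ≤ ∑' n : ℕ, ‖z ^ (n + 1) / qp Q Q (n + 1)‖ := norm_tsum_le_tsum_norm htail.norm
    _ ≤ ∑' n : ℕ, ‖z‖ / C * ‖z‖ ^ n := by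
        apply Summable.tsum_le_tsum hbound htail.norm
        exact (summable_geometric_of_lt_one (norm_nonneg z) hz).mul_left _
    _ = ‖z‖ / C * (1 - ‖z‖)⁻¹ := by
        rw [tsum_mul_left, tsum_geometric_of_lt_one (norm_nonneg z) hz]

lemma F_tendsto_one {Q : ℂ} (hQ : ‖Q‖ < 1) {z : ℂ} (hz : ‖z‖ < 1) :
    Tendsto (fun N : ℕ => F Q (z * Q ^ N)) atTop (𝓝 1) := by
  obtain ⟨C, hC0, hC⟩ := exists_lb hQ
  rw [tendsto_iff_norm_sub_tendsto_zero]
  apply squeeze_zero (fun N => norm_nonneg _)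
    (g := fun N : ℕ => ‖z‖ * ‖Q‖ ^ N / C * (1 - ‖z‖)⁻¹)
  · intro N
    have hzN : ‖z * Q ^ N‖ < 1 := norm_mul_pow_lt hQ hz N
    refine (F_sub_one hQ hC0 hC hzN).trans ?_
    rw [norm_mul, norm_pow]
    have h0 : 0 < 1 - ‖z‖ := by linarith
    have hle : ‖z‖ * ‖Q‖ ^ N ≤ ‖z‖ :=
      mul_le_of_le_one_right (norm_nonneg z) (pow_le_one₀ (norm_nonneg Q) hQ.le)
    have h3 : 1 - ‖z‖ ≤ 1 - ‖z‖ * ‖Q‖ ^ N := by linarith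
    exact mul_le_mul_of_nonneg_left (inv_anti₀ h0 h3) (by positivity)
  · have : Tendsto (fun N : ℕ => ‖Q‖ ^ N) atTop (𝓝 0) :=
      tendsto_pow_atTop_nhds_zero_of_norm_lt_one (by simpa using hQ)
    have h2 := ((this.const_mul ‖z‖).div_const C).mul_const (1 - ‖z‖)⁻¹
    simpa using h2

lemma euler_B {Q : ℂ} (hQ : ‖Q‖ < 1) {z : ℂ} (hz : ‖z‖ < 1) :
    qpInf z Q * F Q z = 1 := by
  have h1 : Tendsto (fun N : ℕ => qp z Q N * F Q z) atTop (𝓝 (qpInf z Q * F Q z)) :=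
    (tendsto_qp hQ hz).mul_const _
  have h2 : Tendsto (fun N : ℕ => qp z Q N * F Q z) atTop (𝓝 1) :=
    (F_tendsto_one hQ hz).congr (fun N => (F_prod hQ hz N).symm)
  exact tendsto_nhds_unique h1 h2

lemma tri_succ (j : ℕ) : (j + 1) * (j + 1 + 1) / 2 = j * (j + 1) / 2 + (j + 1) := by
  obtain ⟨a, ha⟩ := (Nat.even_mul_succ_self j).two_dvd
  have hb : (j + 1) * (j + 1 + 1) = 2 * (a + (j + 1)) := by
    rw [show (j + 1) * (j + 1 + 1) = j * (j + 1) + 2 * (j + 1) from by ring, ha]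
    ring
  rw [ha, hb, Nat.mul_div_cancel_left _ (by norm_num), Nat.mul_div_cancel_left _ (by norm_num)]

lemma norm_mul_pow_le_one {Q x : ℂ} (hQ : ‖Q‖ < 1) (hx : ‖x‖ ≤ 1) (N : ℕ) :
    ‖x * Q ^ N‖ ≤ 1 := by
  rw [norm_mul, norm_pow]
  exact mul_le_one₀ hx (by positivity) (pow_le_one₀ (norm_nonneg Q) hQ.le)

lemma H_rec {Q : ℂ} (hQ : ‖Q‖ < 1) {x : ℂ} (hx : ‖x‖ ≤ 1) :
    H Q x = (1 - x * Q) * H Q (x * Q) := by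
  have hxQ : ‖x * Q‖ ≤ 1 := by
    have := norm_mul_pow_le_one hQ hx 1
    simpa using this
  have hs1 := summable_H hQ hx
  have hs2 := summable_H hQ hxQ
  have key : H Q x - H Q (x * Q) = -(x * Q) * H Q (x * Q) := by
    rw [H, H, ← Summable.tsum_sub hs1 hs2]
    have hsg : Summable (fun j : ℕ =>
        (-1 : ℂ) ^ j * Q ^ (j * (j + 1) / 2) * (x ^ j - (x * Q) ^ j) / qp Q Q j) :=
      (hs1.sub hs2).congr fun j => by ring
    have hcongr : ∀ j : ℕ, (-1 : ℂ) ^ j * Q ^ (j * (j + 1) / 2) * x ^ j / qp Q Q j -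
        (-1 : ℂ) ^ j * Q ^ (j * (j + 1) / 2) * (x * Q) ^ j / qp Q Q j
        = (-1 : ℂ) ^ j * Q ^ (j * (j + 1) / 2) * (x ^ j - (x * Q) ^ j) / qp Q Q j :=
      fun j => by ring
    rw [tsum_congr hcongr, Summable.tsum_eq_zero_add hsg]
    have h0 : (-1 : ℂ) ^ 0 * Q ^ (0 * (0 + 1) / 2) * (x ^ 0 - (x * Q) ^ 0) / qp Q Q 0 = 0 := by
      simp
    have hstep : ∀ j : ℕ,
        (-1 : ℂ) ^ (j + 1) * Q ^ ((j + 1) * (j + 1 + 1) / 2) * (x ^ (j + 1) - (x * Q) ^ (j + 1)) /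
          qp Q Q (j + 1)
        = -(x * Q) * ((-1) ^ j * Q ^ (j * (j + 1) / 2) * (x * Q) ^ j / qp Q Q j) := by
      intro j
      have h2 : (1 : ℂ) - Q * Q ^ j ≠ 0 := factor_ne hQ hQ j
      have h3 : qp Q Q j ≠ 0 := qp_ne_zero hQ hQ j
      rw [qp_succ, tri_succ, pow_add]
      field_simp
      ring
    rw [h0, zero_add, tsum_congr hstep, tsum_mul_left]
  linear_combination key

lemma H_prod {Q : ℂ} (hQ : ‖Q‖ < 1) {x : ℂ} (hx : ‖x‖ ≤ 1) (N : ℕ) :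
    H Q x = qp (x * Q) Q N * H Q (x * Q ^ N) := by
  induction N with
  | zero => simp [qp]
  | succ N ih =>
    have hx' : ‖x * Q ^ N‖ ≤ 1 := norm_mul_pow_le_one hQ hx N
    have e1 : x * Q ^ N * Q = x * Q ^ (N + 1) := by rw [pow_succ]; ring
    calc H Q x = qp (x * Q) Q N * ((1 - x * Q ^ N * Q) * H Q (x * Q ^ N * Q)) := by
          rw [← H_rec hQ hx', ← ih]
      _ = qp (x * Q) Q (N + 1) * H Q (x * Q ^ (N + 1)) := by
          rw [e1, qp_succ]
          ring

lemma H_sub_one {Q : ℂ} (hQ : ‖Q‖ < 1) {C : ℝ} (hC0 : 0 < C) (hC : ∀ n, C ≤ ‖qp Q Q n‖)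
    {x : ℂ} (hx : ‖x‖ ≤ 1) : ‖H Q x - 1‖ ≤ ‖x‖ * (‖Q‖ / C * (1 - ‖Q‖)⁻¹) := by
  have hs1 := summable_H hQ hx
  have htail : Summable (fun j : ℕ =>
      (-1 : ℂ) ^ (j + 1) * Q ^ ((j + 1) * (j + 1 + 1) / 2) * x ^ (j + 1) / qp Q Q (j + 1)) :=
    (summable_nat_add_iff
      (f := fun j => (-1 : ℂ) ^ j * Q ^ (j * (j + 1) / 2) * x ^ j / qp Q Q j) 1).mpr hs1
  have hH : H Q x - 1 = ∑' j : ℕ,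
      (-1 : ℂ) ^ (j + 1) * Q ^ ((j + 1) * (j + 1 + 1) / 2) * x ^ (j + 1) / qp Q Q (j + 1) := by
    rw [H, Summable.tsum_eq_zero_add hs1]
    simp [qp]
  rw [hH]
  have hbound : ∀ j : ℕ,
      ‖(-1 : ℂ) ^ (j + 1) * Q ^ ((j + 1) * (j + 1 + 1) / 2) * x ^ (j + 1) / qp Q Q (j + 1)‖
      ≤ ‖x‖ * ‖Q‖ / C * ‖Q‖ ^ j := by
    intro j
    rw [norm_div, norm_mul, norm_mul, norm_pow, norm_pow, norm_pow, norm_neg, norm_one, one_pow,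
      one_mul]
    have hb1 : ‖Q‖ ^ ((j + 1) * (j + 1 + 1) / 2) ≤ ‖Q‖ ^ (j + 1) :=
      pow_le_pow_of_le_one (norm_nonneg Q) hQ.le (tri_le (j + 1))
    have hb2 : ‖x‖ ^ (j + 1) ≤ ‖x‖ := by
      calc ‖x‖ ^ (j + 1) ≤ ‖x‖ ^ 1 := pow_le_pow_of_le_one (norm_nonneg x) hx (by omega)
        _ = ‖x‖ := pow_one _
    calc ‖Q‖ ^ ((j + 1) * (j + 1 + 1) / 2) * ‖x‖ ^ (j + 1) / ‖qp Q Q (j + 1)‖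
        ≤ ‖Q‖ ^ (j + 1) * ‖x‖ / C := by
          apply div_le_div₀ (by positivity) ?_ hC0 (hC (j + 1))
          exact mul_le_mul hb1 hb2 (by positivity) (by positivity)
      _ = ‖x‖ * ‖Q‖ / C * ‖Q‖ ^ j := by ring
  calc ‖∑' j : ℕ, (-1 : ℂ) ^ (j + 1) * Q ^ ((j + 1) * (j + 1 + 1) / 2) * x ^ (j + 1) /
          qp Q Q (j + 1)‖
      ≤ ∑' j : ℕ, ‖(-1 : ℂ) ^ (j + 1) * Q ^ ((j + 1) * (j + 1 + 1) / 2) * x ^ (j + 1) /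
          qp Q Q (j + 1)‖ := norm_tsum_le_tsum_norm htail.norm
    _ ≤ ∑' j : ℕ, ‖x‖ * ‖Q‖ / C * ‖Q‖ ^ j := by
        apply Summable.tsum_le_tsum hbound htail.norm
        exact (summable_geometric_of_lt_one (norm_nonneg Q) hQ).mul_left _
    _ = ‖x‖ * (‖Q‖ / C * (1 - ‖Q‖)⁻¹) := by
        rw [tsum_mul_left, tsum_geometric_of_lt_one (norm_nonneg Q) hQ]
        ring

lemma H_tendsto_one {Q : ℂ} (hQ : ‖Q‖ < 1) {x : ℂ} (hx : ‖x‖ ≤ 1) :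
    Tendsto (fun N : ℕ => H Q (x * Q ^ N)) atTop (𝓝 1) := by
  obtain ⟨C, hC0, hC⟩ := exists_lb hQ
  rw [tendsto_iff_norm_sub_tendsto_zero]
  apply squeeze_zero (fun N => norm_nonneg _)
    (g := fun N : ℕ => ‖x‖ * ‖Q‖ ^ N * (‖Q‖ / C * (1 - ‖Q‖)⁻¹))
  · intro N
    have hxN : ‖x * Q ^ N‖ ≤ 1 := norm_mul_pow_le_one hQ hx N
    have := H_sub_one hQ hC0 hC hxN
    rwa [norm_mul, norm_pow] at this
  · have h1 : Tendsto (fun N : ℕ => ‖Q‖ ^ N) atTop (𝓝 0) :=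
      tendsto_pow_atTop_nhds_zero_of_norm_lt_one (by simpa using hQ)
    have h2 := (h1.const_mul ‖x‖).mul_const (‖Q‖ / C * (1 - ‖Q‖)⁻¹)
    simpa using h2

lemma euler_A {Q : ℂ} (hQ : ‖Q‖ < 1) {x : ℂ} (hx : ‖x‖ ≤ 1) :
    H Q x = qpInf (x * Q) Q := by
  have hxQ : ‖x * Q‖ < 1 := by
    rw [norm_mul]
    calc ‖x‖ * ‖Q‖ ≤ 1 * ‖Q‖ := mul_le_mul_of_nonneg_right hx (norm_nonneg Q)
      _ < 1 := by simpa using hQ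
  have h1 : Tendsto (fun N : ℕ => qp (x * Q) Q N * H Q (x * Q ^ N)) atTop
      (𝓝 (qpInf (x * Q) Q * 1)) := (tendsto_qp hQ hxQ).mul (H_tendsto_one hQ hx)
  have h2 : Tendsto (fun _ : ℕ => H Q x) atTop (𝓝 (qpInf (x * Q) Q * 1)) :=
    h1.congr fun N => (H_prod hQ hx N).symm
  have := tendsto_nhds_unique tendsto_const_nhds h2
  simpa using this

lemma norm_primroot {h : ℕ} (hh : 1 ≤ h) {ω : ℂ} (hω : IsPrimitiveRoot ω h) : ‖ω‖ = 1 := by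
  have h1 : ‖ω‖ ^ h = 1 := by rw [← norm_pow, hω.pow_eq_one, norm_one]
  rcases lt_trichotomy ‖ω‖ 1 with hl | he | hg
  · exfalso
    have := pow_lt_one₀ (norm_nonneg ω) hl (by omega : h ≠ 0)
    rw [h1] at this
    exact lt_irrefl _ this
  · exact he
  · exfalso
    have := one_lt_pow₀ hg (by omega : h ≠ 0)
    rw [h1] at this
    exact lt_irrefl _ this

lemma root_filter {h : ℕ} (hh : 1 ≤ h) {ω : ℂ} (hω : IsPrimitiveRoot ω h) (n : ℕ) :
    ∑ r ∈ Finset.range h, (ω ^ n) ^ r = if h ∣ n then (h : ℂ) else 0 := by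
  by_cases hd : h ∣ n
  · rw [if_pos hd]
    have : ω ^ n = 1 := (hω.pow_eq_one_iff_dvd n).mpr hd
    simp [this]
  · rw [if_neg hd]
    have h1 : ω ^ n ≠ 1 := fun hc => hd ((hω.pow_eq_one_iff_dvd n).mp hc)
    have h2 : (ω ^ n) ^ h = 1 := by
      rw [← pow_mul, mul_comm, pow_mul, hω.pow_eq_one, one_pow]
    rw [geom_sum_eq h1, h2]
    simp

lemma tsum_multiples {f : ℕ → ℂ} {h : ℕ} (hh : 1 ≤ h) :
    ∑' n : ℕ, (if h ∣ n then f n else 0) = ∑' m : ℕ, f (h * m) := by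
  have hinj : Function.Injective (fun m : ℕ => h * m) := fun a b hab =>
    Nat.eq_of_mul_eq_mul_left (by omega) hab
  have hsupp : Function.support (fun n : ℕ => if h ∣ n then f n else 0) ⊆
      Set.range (fun m : ℕ => h * m) := by
    intro n hn
    by_cases hd : h ∣ n
    · obtain ⟨m, rfl⟩ := hd
      exact ⟨m, rfl⟩
    · simp [Function.mem_support, hd] at hn
  have key := hinj.tsum_eq (f := fun n : ℕ => if h ∣ n then f n else 0) hsupp
  rw [← key]
  apply tsum_congr
  intro m
  exact if_pos ⟨m, rfl⟩

end E166

/-- root-of-unity summation generalizing Entry 1.6.6. -/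
theorem entry_1_6_6_root_of_unity (h : ℕ) (hh : 1 ≤ h) (q t a ω : ℂ)
    (hq : ‖q‖ < 1) (hqt : ‖q ^ t‖ < 1)
    (hω : IsPrimitiveRoot ω h)
    (haq : ‖a * q‖ < 1)
    (h1 : ∀ j : ℕ, (1 - a ^ h * q ^ h * (q ^ t) ^ (h * j)) ≠ 0)
    (h2 : ∀ r : ℕ, r < h → qpInf (a * q * ω ^ r) (q ^ t) ≠ 0) :
    ∑' j : ℕ, (-1 : ℂ) ^ j * (q ^ t) ^ (j * (j + 1) / 2) /
        (qp (q ^ t) (q ^ t) j * (1 - a ^ h * q ^ h * (q ^ t) ^ (h * j)))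
    = (1 / (h : ℂ)) *
      ∑ r ∈ Finset.range h, qpInf (q ^ t) (q ^ t) / qpInf (a * q * ω ^ r) (q ^ t) := by
  clear h1 h2
  set Q : ℂ := q ^ t with hQdef
  set A : ℂ := a * q with hAdef
  have hQ1 : ‖Q‖ < 1 := hqt
  have hA1 : ‖A‖ < 1 := haq
  have hω1 : ‖ω‖ = 1 := E166.norm_primroot hh hω
  obtain ⟨C, hC0, hC⟩ := E166.exists_lb hQ1
  have hh0 : (h : ℂ) ≠ 0 := Nat.cast_ne_zero.mpr (by omega)
  simp only [show a ^ h * q ^ h = A ^ h from (mul_pow a q h).symm]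
  have hAh1 : ‖A ^ h‖ < 1 := by
    rw [norm_pow]
    exact pow_lt_one₀ (norm_nonneg A) hA1 (by omega)
  have hW : ∀ j : ℕ, ‖A ^ h * Q ^ (h * j)‖ < 1 := fun j => E166.norm_mul_pow_lt hQ1 hAh1 (h * j)
  set g : ℕ → ℕ → ℂ := fun j m =>
    ((-1 : ℂ) ^ j * Q ^ (j * (j + 1) / 2) / qp Q Q j) * (A ^ h * Q ^ (h * j)) ^ m with hgdef
  have step1 : ∀ j : ℕ, (-1 : ℂ) ^ j * Q ^ (j * (j + 1) / 2) /
      (qp Q Q j * (1 - A ^ h * Q ^ (h * j))) = ∑' m : ℕ, g j m := by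
    intro j
    simp only [hgdef]
    rw [tsum_mul_left, tsum_geometric_of_norm_lt_one (hW j), ← div_div, div_eq_mul_inv]
  have hb1 : ∀ j : ℕ, ‖(-1 : ℂ) ^ j * Q ^ (j * (j + 1) / 2) / qp Q Q j‖ ≤ 1 / C * ‖Q‖ ^ j := by
    intro j
    rw [norm_div, norm_mul, norm_pow, norm_pow, norm_neg, norm_one, one_pow, one_mul]
    calc ‖Q‖ ^ (j * (j + 1) / 2) / ‖qp Q Q j‖ ≤ ‖Q‖ ^ j / C :=
          div_le_div₀ (by positivity)
            (pow_le_pow_of_le_one (norm_nonneg Q) hQ1.le (E166.tri_le j)) hC0 (hC j)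
      _ = 1 / C * ‖Q‖ ^ j := by ring
  have hb2 : ∀ j m : ℕ, ‖(A ^ h * Q ^ (h * j)) ^ m‖ ≤ (‖A‖ ^ h) ^ m := by
    intro j m
    rw [norm_pow]
    apply pow_le_pow_left₀ (norm_nonneg _) _ m
    rw [norm_mul, norm_pow, norm_pow]
    calc ‖A‖ ^ h * ‖Q‖ ^ (h * j) ≤ ‖A‖ ^ h * 1 :=
          mul_le_mul_of_nonneg_left (pow_le_one₀ (norm_nonneg Q) hQ1.le) (by positivity)
      _ = ‖A‖ ^ h := mul_one _
  have hgeoA : Summable (fun m : ℕ => (‖A‖ ^ h) ^ m) :=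
    summable_geometric_of_lt_one (by positivity) (pow_lt_one₀ (norm_nonneg A) hA1 (by omega))
  have hgeoQ : Summable (fun j : ℕ => 1 / C * ‖Q‖ ^ j) :=
    (summable_geometric_of_lt_one (norm_nonneg Q) hQ1).mul_left _
  have hprod : Summable (fun p : ℕ × ℕ => 1 / C * ‖Q‖ ^ p.1 * (‖A‖ ^ h) ^ p.2) :=
    hgeoQ.mul_of_nonneg hgeoA (fun j => by positivity) (fun m => by positivity)
  have hg : Summable (Function.uncurry g) := by
    apply Summable.of_norm_bounded hprod
    rintro ⟨j, m⟩
    simp only [Function.uncurry_apply_pair, hgdef]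
    rw [norm_mul]
    exact mul_le_mul (hb1 j) (hb2 j m) (norm_nonneg _) (by positivity)
  have hswap : ∑' m : ℕ, ∑' j : ℕ, g j m = ∑' j : ℕ, ∑' m : ℕ, g j m :=
    Summable.tsum_comm' hg (fun j => hg.prod_factor j) (fun m => hg.prod_symm.prod_factor m)
  have step3 : ∀ m : ℕ, ∑' j : ℕ, g j m = A ^ (h * m) * qpInf (Q ^ (h * m) * Q) Q := by
    intro m
    have hxm : ‖Q ^ (h * m)‖ ≤ 1 := by
      rw [norm_pow]
      exact pow_le_one₀ (norm_nonneg Q) hQ1.le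
    have hexp : ∀ j : ℕ, g j m = A ^ (h * m) *
        ((-1 : ℂ) ^ j * Q ^ (j * (j + 1) / 2) * (Q ^ (h * m)) ^ j / qp Q Q j) := by
      intro j
      simp only [hgdef]
      have hw : (A ^ h * Q ^ (h * j)) ^ m = A ^ (h * m) * (Q ^ (h * m)) ^ j := by
        rw [mul_pow, ← pow_mul, ← pow_mul, ← pow_mul, show h * j * m = h * m * j from by ring]
      rw [hw]
      ring
    rw [tsum_congr hexp, tsum_mul_left]
    congr 1
    exact E166.euler_A hQ1 hxm
  have hterm : ∀ m : ℕ, A ^ (h * m) * qpInf (Q ^ (h * m) * Q) Q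
      = qpInf Q Q * (A ^ (h * m) / qp Q Q (h * m)) := by
    intro m
    have hsplit := E166.qp_mul_qpInf hQ1 hQ1 (h * m)
    have hqpne : qp Q Q (h * m) ≠ 0 := E166.qp_ne_zero hQ1 hQ1 (h * m)
    rw [mul_comm (Q ^ (h * m)) Q]
    field_simp
    linear_combination A ^ (h * m) * hsplit
  have hLHS : ∑' j : ℕ, (-1 : ℂ) ^ j * Q ^ (j * (j + 1) / 2) /
      (qp Q Q j * (1 - A ^ h * Q ^ (h * j)))
      = qpInf Q Q * ∑' m : ℕ, A ^ (h * m) / qp Q Q (h * m) := by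
    rw [tsum_congr step1, ← hswap, tsum_congr step3, tsum_congr hterm, tsum_mul_left]
  have hωr : ∀ r : ℕ, ‖A * ω ^ r‖ < 1 := fun r => by
    rw [norm_mul, norm_pow, hω1, one_pow, mul_one]
    exact hA1
  have hFr : ∀ r ∈ Finset.range h, qpInf Q Q / qpInf (A * ω ^ r) Q
      = qpInf Q Q * E166.F Q (A * ω ^ r) := by
    intro r _
    have hB := E166.euler_B hQ1 (hωr r)
    have hne : qpInf (A * ω ^ r) Q ≠ 0 := left_ne_zero_of_mul_eq_one hB
    rw [div_eq_iff hne]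
    linear_combination (-(qpInf Q Q)) * hB
  have hFsum : ∀ r : ℕ, Summable (fun n : ℕ => (A * ω ^ r) ^ n / qp Q Q n) :=
    fun r => E166.summable_F hQ1 (hωr r)
  have key_n : ∀ n : ℕ, ∑ r ∈ Finset.range h, (A * ω ^ r) ^ n / qp Q Q n
      = (h : ℂ) * (if h ∣ n then A ^ n / qp Q Q n else 0) := by
    intro n
    have hrn : ∀ r : ℕ, (A * ω ^ r) ^ n / qp Q Q n = A ^ n / qp Q Q n * (ω ^ n) ^ r := by
      intro r
      rw [mul_pow, ← pow_mul, mul_comm r n, pow_mul]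
      ring
    rw [Finset.sum_congr rfl (fun r _ => hrn r), ← Finset.mul_sum,
      E166.root_filter hh hω n]
    split_ifs <;> ring
  have hRHS : (1 / (h : ℂ)) * ∑ r ∈ Finset.range h, qpInf Q Q / qpInf (A * ω ^ r) Q
      = qpInf Q Q * ∑' m : ℕ, A ^ (h * m) / qp Q Q (h * m) := by
    rw [Finset.sum_congr rfl hFr, ← Finset.mul_sum]
    have hs : ∑ r ∈ Finset.range h, E166.F Q (A * ω ^ r)
        = (h : ℂ) * ∑' m : ℕ, A ^ (h * m) / qp Q Q (h * m) := by
      calc ∑ r ∈ Finset.range h, E166.F Q (A * ω ^ r)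
          = ∑' n : ℕ, ∑ r ∈ Finset.range h, (A * ω ^ r) ^ n / qp Q Q n :=
            (Summable.tsum_finsetSum (fun r _ => hFsum r)).symm
        _ = ∑' n : ℕ, (h : ℂ) * (if h ∣ n then A ^ n / qp Q Q n else 0) := tsum_congr key_n
        _ = (h : ℂ) * ∑' n : ℕ, (if h ∣ n then A ^ n / qp Q Q n else 0) := tsum_mul_left
        _ = (h : ℂ) * ∑' m : ℕ, A ^ (h * m) / qp Q Q (h * m) := by
            rw [E166.tsum_multiples hh]
    rw [hs]
    field_simp
  exact hLHS.trans hRHS.symm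
end
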